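/- arXiv:1911.04980 — 2 statements merged into one kernel-verified Lean document; each statement's English description precedes it below -/
import Mathlib

section
/- Let (A, ρ, [.,.]) be a skew algebroid and Π a bivector field on A. Then for all sections α, β, γ of A*: γ(♯_Π([α,β]_Π) − [♯_Π(α), ♯_Π(β)]) = (1/2)[Π,Π](α,β,γ). Consequently, if [Π,Π] = 0 and (A,ρ,[.,.]) is an almost Lie algebroid, then (A*, ρ_Π, [.,.]_Π) is an almost Lie algebroid. -/
/-- Algebraic model of a skew algebroid over a base manifold: `R` plays the role of
the ring of smooth functions, `G` the module of sections of the anchored bundle,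
`bracket` the skew-symmetric bracket satisfying the Leibniz rule, and `anchor`
gives the action of sections on functions by derivations. -/
structure SkewAlgebroid (R : Type*) [CommRing R] (G : Type*)
    [AddCommGroup G] [Module R G] where
  bracket : G → G → G
  anchor : G → R → R
  bracket_add_left : ∀ a b c, bracket (a + b) c = bracket a c + bracket b c
  bracket_skew : ∀ a b, bracket a b = - bracket b a
  anchor_add : ∀ a b φ, anchor (a + b) φ = anchor a φ + anchor b φ
  anchor_smul : ∀ (φ : R) a ψ, anchor (φ • a) ψ = φ * anchor a ψ
  anchor_map_add : ∀ a φ ψ, anchor a (φ + ψ) = anchor a φ + anchor a ψ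
  anchor_map_mul : ∀ a φ ψ, anchor a (φ * ψ) = φ * anchor a ψ + ψ * anchor a φ
  leibniz : ∀ a (φ : R) b, bracket a (φ • b) = φ • bracket a b + anchor a φ • b

namespace SkewAlgebroid

variable {R : Type*} [CommRing R] {G : Type*} [AddCommGroup G] [Module R G]

/-- The bivector field associated to a sharp map `♯ : A* → A`: `Π(α,β) = β(♯α)`. -/
def biv (sharp : (G →ₗ[R] R) → G) (α β : G →ₗ[R] R) : R := β (sharp α)

/-- `♯_{Π,ξ}(α) = ♯_Π(α) + α(ξ)ξ`. -/
def sharpJ (sharp : (G →ₗ[R] R) → G) (ξ : G) (α : G →ₗ[R] R) : G := sharp α + α ξ • ξ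

/-- `(ξ ∧ Π)(α,β,γ)`. -/
def wedgeVB (ξ : G) (sharp : (G →ₗ[R] R) → G) (α β γ : G →ₗ[R] R) : R :=
  α ξ * biv sharp β γ - β ξ * biv sharp α γ + γ ξ * biv sharp α β

variable (S : SkewAlgebroid R G)

lemma bracket_add_right (a b c : G) :
    S.bracket a (b + c) = S.bracket a b + S.bracket a c := by
  rw [S.bracket_skew a (b + c), S.bracket_add_left, S.bracket_skew b a, S.bracket_skew c a]
  abel

/-- The Lie `A`-derivative of a 1-form along a section. -/
def lieDeriv (a : G) (α : G →ₗ[R] R) : G →ₗ[R] R where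
  toFun b := S.anchor a (α b) - α (S.bracket a b)
  map_add' b c := by
    try dsimp only
    rw [map_add, S.anchor_map_add, S.bracket_add_right, map_add]; ring
  map_smul' φ b := by
    try dsimp only
    rw [map_smul, smul_eq_mul, S.anchor_map_mul, S.leibniz, map_add, map_smul, map_smul,
      smul_eq_mul, smul_eq_mul, RingHom.id_apply, smul_eq_mul]
    ring

/-- The exterior `A`-differential of a function, as a 1-form. -/
def dform (φ : R) : G →ₗ[R] R where
  toFun a := S.anchor a φ
  map_add' a b := S.anchor_add a b φ
  map_smul' c a := by try dsimp only
                      rw [S.anchor_smul]; rfl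

/-- The exterior `A`-differential of a 1-form. -/
def dOne (η : G →ₗ[R] R) (a b : G) : R :=
  S.anchor a (η b) - S.anchor b (η a) - η (S.bracket a b)

/-- The exterior `A`-differential of a 2-form. -/
def dTwo (Ω : G →ₗ[R] G →ₗ[R] R) (a b c : G) : R :=
  S.anchor a (Ω b c) - S.anchor b (Ω a c) + S.anchor c (Ω a b)
    - Ω (S.bracket a b) c + Ω (S.bracket a c) b - Ω (S.bracket b c) a

/-- The Lie `A`-derivative of a 2-form along a section. -/
def lieTwo (ξ : G) (Ω : G →ₗ[R] G →ₗ[R] R) (a b : G) : R :=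
  S.anchor ξ (Ω a b) - Ω (S.bracket ξ a) b - Ω a (S.bracket ξ b)

/-- The Koszul bracket of 1-forms associated with the bivector field given by `sharp`:
`[α,β]_Π = L_{♯α}β − L_{♯β}α − d_ρ(Π(α,β))`. -/
def koszul (sharp : (G →ₗ[R] R) → G) (α β : G →ₗ[R] R) : G →ₗ[R] R :=
  S.lieDeriv (sharp α) β - S.lieDeriv (sharp β) α - S.dform (biv sharp α β)

/-- The Schouten–Nijenhuis bracket `[Π,Π]`, defined (as in the contravariant calculus)
by `[Π,Π] = −d_{ρ_Π}Π` via the structure `(ρ_Π, [.,.]_Π)` on the dual. -/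
def schouten (sharp : (G →ₗ[R] R) → G) (α β γ : G →ₗ[R] R) : R :=
  -(S.anchor (sharp α) (biv sharp β γ) - S.anchor (sharp β) (biv sharp α γ)
      + S.anchor (sharp γ) (biv sharp α β)
      - biv sharp (S.koszul sharp α β) γ + biv sharp (S.koszul sharp α γ) β
      - biv sharp (S.koszul sharp β γ) α)

/-- The Lie `A`-derivative `L^ρ_ξ Π` of the bivector field. -/
def lieBiv (ξ : G) (sharp : (G →ₗ[R] R) → G) (α β : G →ₗ[R] R) : R :=
  S.anchor ξ (biv sharp α β) - biv sharp (S.lieDeriv ξ α) β - biv sharp α (S.lieDeriv ξ β)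

/-- The deformed dual bracket `[α,β]^λ_{Π,ξ}`. -/
def bracketJ (sharp : (G →ₗ[R] R) → G) (ξ : G) (lam : G →ₗ[R] R) (α β : G →ₗ[R] R) :
    G →ₗ[R] R :=
  S.koszul sharp α β + α ξ • (S.lieDeriv ξ β - β) - β ξ • (S.lieDeriv ξ α - α)
    - biv sharp α β • lam

/-- The anchor is a bracket morphism (almost Lie algebroid condition). -/
def IsAlmostLie : Prop := ∀ a b φ,
  S.anchor (S.bracket a b) φ = S.anchor a (S.anchor b φ) - S.anchor b (S.anchor a φ)

/-- The Jacobi identity for the bracket (Lie algebroid condition). -/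
def IsJacobi : Prop := ∀ a b c,
  S.bracket (S.bracket a b) c + S.bracket (S.bracket b c) a + S.bracket (S.bracket c a) b = 0

end SkewAlgebroid

open SkewAlgebroid

variable {R : Type*} [CommRing R] {G : Type*} [AddCommGroup G] [Module R G]

lemma koszul_apply_aux (S : SkewAlgebroid R G) (sharp : (G →ₗ[R] R) → G)
    (α β : G →ₗ[R] R) (c : G) :
    S.koszul sharp α β c =
      S.anchor (sharp α) (β c) - β (S.bracket (sharp α) c)
        - (S.anchor (sharp β) (α c) - α (S.bracket (sharp β) c))
        - S.anchor c (β (sharp α)) := by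
  simp [SkewAlgebroid.koszul, SkewAlgebroid.lieDeriv, SkewAlgebroid.dform, SkewAlgebroid.biv]

lemma anchor_map_zero_aux (S : SkewAlgebroid R G) (a : G) : S.anchor a 0 = 0 := by
  have h := S.anchor_map_add a 0 0
  rw [add_zero] at h
  exact (add_eq_left.mp h.symm)

lemma anchor_map_neg_aux (S : SkewAlgebroid R G) (a : G) (x : R) :
    S.anchor a (-x) = - S.anchor a x := by
  have h := S.anchor_map_add a x (-x)
  rw [add_neg_cancel, anchor_map_zero_aux] at h
  exact eq_neg_of_add_eq_zero_right h.symm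

lemma half_add_self_smul_aux [Algebra ℝ R] (x : R) : (1/2 : ℝ) • (x + x) = x := by
  rw [← two_smul ℝ x, smul_smul]
  norm_num

lemma schouten_eq_twice_torsion_aux (S : SkewAlgebroid R G) (sharp : (G →ₗ[R] R) → G)
    (hskew : ∀ α β : G →ₗ[R] R, α (sharp β) = - β (sharp α)) (α β γ : G →ₗ[R] R) :
    S.schouten sharp α β γ =
      γ (sharp (S.koszul sharp α β) - S.bracket (sharp α) (sharp β))
        + γ (sharp (S.koszul sharp α β) - S.bracket (sharp α) (sharp β)) := by
  have hK1 := hskew γ (S.koszul sharp α β)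
  have hK2 := hskew β (S.koszul sharp α γ)
  have hK3 := hskew α (S.koszul sharp β γ)
  have h1 := hskew α γ
  have h2 := hskew β γ
  have h3 := hskew α β
  have hb1 : α (S.bracket (sharp γ) (sharp β)) = - α (S.bracket (sharp β) (sharp γ)) := by
    rw [S.bracket_skew (sharp γ) (sharp β), map_neg]
  have hb2 : β (S.bracket (sharp γ) (sharp α)) = - β (S.bracket (sharp α) (sharp γ)) := by
    rw [S.bracket_skew (sharp γ) (sharp α), map_neg]
  have hb3 : γ (S.bracket (sharp β) (sharp α)) = - γ (S.bracket (sharp α) (sharp β)) := by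
    rw [S.bracket_skew (sharp β) (sharp α), map_neg]
  rw [koszul_apply_aux] at hK2 hK3
  simp only [SkewAlgebroid.schouten, SkewAlgebroid.biv, map_sub,
    koszul_apply_aux] at hK1
  unfold SkewAlgebroid.schouten SkewAlgebroid.biv
  rw [map_sub γ, hK1, hK2, hK3, h1, h2, h3, hb1, hb2, hb3]
  simp only [anchor_map_neg_aux, map_neg, neg_neg]
  ring

/-- torsion of the dual skew algebroid of a bivector field:
`γ(♯_Π([α,β]_Π) − [♯_Π α, ♯_Π β]) = (1/2)[Π,Π](α,β,γ)`, and if `[Π,Π]=0` and the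
algebroid is almost Lie, the dual structure `(A*, ρ_Π, [.,.]_Π)` is almost Lie. -/
theorem koszul_torsion_and_almostLie [Algebra ℝ R]
    (S : SkewAlgebroid R G) (sharp : (G →ₗ[R] R) → G)
    (hskew : ∀ α β : G →ₗ[R] R, α (sharp β) = - β (sharp α)) :
    (∀ α β γ : G →ₗ[R] R,
        γ (sharp (S.koszul sharp α β) - S.bracket (sharp α) (sharp β))
          = (1/2 : ℝ) • S.schouten sharp α β γ)
    ∧ ((∀ α β γ : G →ₗ[R] R, S.schouten sharp α β γ = 0) → S.IsAlmostLie →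
        ∀ (α β : G →ₗ[R] R) (φ : R),
          S.anchor (sharp (S.koszul sharp α β)) φ
            = S.anchor (sharp α) (S.anchor (sharp β) φ)
              - S.anchor (sharp β) (S.anchor (sharp α) φ)) := by
  have hmain : ∀ α β γ : G →ₗ[R] R,
      γ (sharp (S.koszul sharp α β) - S.bracket (sharp α) (sharp β))
        = (1/2 : ℝ) • S.schouten sharp α β γ := by
    intro α β γ
    rw [schouten_eq_twice_torsion_aux S sharp hskew α β γ, half_add_self_smul_aux]
  refine ⟨hmain, ?_⟩
  intro hsch hAL α β φ
  have h := hmain α β (S.dform φ)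
  rw [hsch, smul_zero, map_sub] at h
  have h' : S.dform φ (sharp (S.koszul sharp α β)) =
      S.dform φ (S.bracket (sharp α) (sharp β)) := sub_eq_zero.mp h
  simp only [SkewAlgebroid.dform, LinearMap.coe_mk, AddHom.coe_mk] at h'
  rw [h', hAL]
end

section
/- Let (A, ρ, [.,.], g) be a pseudo-Riemannian skew algebroid, Π a bivector field and ξ a vector field on A with L^ρ_ξΠ = 0. Let λ = g(ξ,ξ)♭_g(ξ) − ♭_g(Jξ) and suppose the triple (Π, ξ, g) is compatible, i.e. the contravariant Levi-Civita connection D of (A*, ρ_{Π,ξ}, [.,.]^g_{Π,ξ}, g*) satisfies DΠ(α,β,γ) = (1/2)(γ(ξ)Π(α,β) − β(ξ)Π(α,γ) − J*γ(ξ)g*(α,β) + J*β(ξ)g*(α,γ)). Then (Π, ξ) is a Jacobi structure if and only if (ξ − ♯_Π(λ)) ∧ Π = 0. -/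
open SkewAlgebroid

variable {R : Type*} [CommRing R] {G : Type*} [AddCommGroup G] [Module R G]

/-- for a compatible triple `(Π,ξ,g)` with `L_ξΠ = 0` and
`λ = g(ξ,ξ)♭_g(ξ) − ♭_g(Jξ)`, the pair `(Π,ξ)` is a Jacobi structure iff
`(ξ − ♯_Π(λ)) ∧ Π = 0`. -/
theorem jacobi_iff_wedge_vanishes [Algebra ℝ R]
    (S : SkewAlgebroid R G) (sharp : (G →ₗ[R] R) → G)
    (hskew : ∀ α β : G →ₗ[R] R, α (sharp β) = - β (sharp α))
    (ξ : G)
    (hL : ∀ α β : G →ₗ[R] R, S.lieBiv ξ sharp α β = 0)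
    (gb : G →ₗ[R] G →ₗ[R] R) (hgb_symm : ∀ a b : G, gb a b = gb b a)
    (eg : G ≃ₗ[R] (G →ₗ[R] R)) (heg : ∀ a b : G, eg a b = gb a b)
    (J : G → G)
    (hJ : ∀ α β : G →ₗ[R] R, gb (J (eg.symm α)) (eg.symm β) = biv sharp α β)
    (Js : (G →ₗ[R] R) → (G →ₗ[R] R))
    (hJs : ∀ α β : G →ₗ[R] R, gb (eg.symm (Js α)) (eg.symm β) = biv sharp α β)
    (D : (G →ₗ[R] R) → (G →ₗ[R] R) → (G →ₗ[R] R))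
    (hD_torsionfree : ∀ α β, D α β - D β α
      = S.bracketJ sharp ξ (gb ξ ξ • eg ξ - eg (J ξ)) α β)
    (hD_metric : ∀ α β γ,
      S.anchor (sharpJ sharp ξ α) (gb (eg.symm β) (eg.symm γ))
        = gb (eg.symm (D α β)) (eg.symm γ) + gb (eg.symm β) (eg.symm (D α γ)))
    (hcompat : ∀ α β γ : G →ₗ[R] R,
      S.anchor (sharpJ sharp ξ α) (biv sharp β γ)
          - biv sharp (D α β) γ - biv sharp β (D α γ)
        = (1/2 : ℝ) • (γ ξ * biv sharp α β - β ξ * biv sharp α γ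
            - Js γ ξ * gb (eg.symm α) (eg.symm β)
            + Js β ξ * gb (eg.symm α) (eg.symm γ))) :
    ((∀ α β γ : G →ₗ[R] R, S.schouten sharp α β γ = 2 * wedgeVB ξ sharp α β γ)
        ∧ (∀ α β : G →ₗ[R] R, S.lieBiv ξ sharp α β = 0))
    ↔ (∀ α β γ : G →ₗ[R] R,
        wedgeVB (ξ - sharp (gb ξ ξ • eg ξ - eg (J ξ))) sharp α β γ = 0) := by
  have half : ∀ x : R, (2 : R) * ((1/2 : ℝ) • x) = x := by
    intro x
    rw [Algebra.smul_def, ← mul_assoc, show ((2:R)) = algebraMap ℝ R 2 from (map_ofNat (algebraMap ℝ R) 2).symm, ← map_mul]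
    norm_num
  have half2 : ∀ x : R, (1/2 : ℝ) • (2 * x) = x := by
    intro x
    rw [mul_comm, ← smul_mul_assoc, mul_comm]
    exact half x
  have cancel2 : ∀ x y : R, 2 * x = 2 * y → x = y := by
    intro x y hxy
    have h := congrArg (fun z : R => (1/2 : ℝ) • z) hxy
    simpa only [half2] using h
  have hc2 : ∀ α β γ : G →ₗ[R] R,
      2 * (S.anchor (sharpJ sharp ξ α) (biv sharp β γ)
          - biv sharp (D α β) γ - biv sharp β (D α γ))
        = γ ξ * biv sharp α β - β ξ * biv sharp α γ
            - Js γ ξ * gb (eg.symm α) (eg.symm β)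
            + Js β ξ * gb (eg.symm α) (eg.symm γ) := by
    intro α β γ
    rw [hcompat]; exact half _
  have hanch : ∀ (α : G →ₗ[R] R) (φ : R),
      S.anchor (sharp α + α ξ • ξ) φ = S.anchor (sharp α) φ + α ξ * S.anchor ξ φ := by
    intro α φ
    rw [S.anchor_add, S.anchor_smul]
  have key : ∀ α β γ : G →ₗ[R] R,
      S.schouten sharp α β γ
        + wedgeVB (ξ - sharp (gb ξ ξ • eg ξ - eg (J ξ))) sharp α β γ
        = 2 * wedgeVB ξ sharp α β γ := by
    intro α β γ
    refine cancel2 _ _ ?_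
    have t1 := DFunLike.congr_fun (hD_torsionfree α β) (sharp γ)
    have t2 := DFunLike.congr_fun (hD_torsionfree α γ) (sharp β)
    have t3 := DFunLike.congr_fun (hD_torsionfree β γ) (sharp α)
    have l1 := hL α β
    have l2 := hL α γ
    have l3 := hL β γ
    have c1 := hc2 α β γ
    have c2 := hc2 β α γ
    have c3 := hc2 γ α β
    have ha := hanch α (biv sharp β γ)
    have hb := hanch β (biv sharp α γ)
    have hc := hanch γ (biv sharp α β)
    have s1 := hskew α β
    have s2 := hskew α γ
    have s3 := hskew β γ
    have sl1 := hskew (gb ξ ξ • eg ξ - eg (J ξ)) α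
    have sl2 := hskew (gb ξ ξ • eg ξ - eg (J ξ)) β
    have sl3 := hskew (gb ξ ξ • eg ξ - eg (J ξ)) γ
    have sk1 := hskew (S.koszul sharp α β) γ
    have sk2 := hskew (S.koszul sharp α γ) β
    have sk3 := hskew (S.koszul sharp β γ) α
    have sL1 := hskew (S.lieDeriv ξ α) β
    have sL2 := hskew (S.lieDeriv ξ α) γ
    have sL3 := hskew (S.lieDeriv ξ β) γ
    have sD1 := hskew (D α β) γ
    have sD2 := hskew (D β α) γ
    have sD3 := hskew (D γ α) β
    have g1 := hgb_symm (eg.symm α) (eg.symm β)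
    have g2 := hgb_symm (eg.symm α) (eg.symm γ)
    have g3 := hgb_symm (eg.symm β) (eg.symm γ)
    simp only [SkewAlgebroid.schouten, wedgeVB, biv, SkewAlgebroid.koszul,
      SkewAlgebroid.bracketJ, SkewAlgebroid.lieDeriv, SkewAlgebroid.dform, sharpJ,
      SkewAlgebroid.lieBiv, LinearMap.sub_apply, LinearMap.add_apply, LinearMap.smul_apply,
      LinearMap.coe_mk, AddHom.coe_mk, smul_eq_mul, map_sub, map_add, map_smul] at t1 t2 t3 l1 l2 l3 c1 c2 c3 ha hb hc s1 s2 s3 sl1 sl2 sl3 sk1 sk2 sk3 sL1 sL2 sL3 sD1 sD2 sD3 ⊢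
    linear_combination (-1 : R) * c1 + c2 - c3
      + 2 * t1 - 2 * t2 + 2 * t3
      + (2 * γ ξ) * l1 - (2 * β ξ) * l2 + (2 * α ξ) * l3
      + 2 * ha - 2 * hb + 2 * hc
      - γ ξ * s1 + β ξ * s2 - α ξ * s3
      - (2 * γ (sharp β)) * sl1 + (2 * γ (sharp α)) * sl2 - (2 * β (sharp α)) * sl3
      + 2 * sk1 - 2 * sk2 + 2 * sk3
      + (2 * γ ξ) * sL1 - (2 * β ξ) * sL2 + (2 * α ξ) * sL3
      - 2 * sD1 + 2 * sD2 - 2 * sD3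
      + Js γ ξ * g1 - Js β ξ * g2 + Js α ξ * g3
  constructor
  · rintro ⟨h1, -⟩ α β γ
    linear_combination key α β γ - h1 α β γ
  · intro h
    exact ⟨fun α β γ => by linear_combination key α β γ - h α β γ, hL⟩
end
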